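/- If w is a geodesic word for an element g of minimal length in its conjugacy class of B_3, then w is cyclically reduced and every cyclic permutation of w is also geodesic. -/

import Mathlib

def B3Rel : Set (FreeGroup Bool) :=
  {FreeGroup.of true * FreeGroup.of false * FreeGroup.of true *
    (FreeGroup.of false * FreeGroup.of true * FreeGroup.of false)⁻¹}

abbrev B3 := PresentedGroup B3Rel

def ga : B3 := PresentedGroup.of true
def gb : B3 := PresentedGroup.of false

/-- generator by a boolean: `true ↦ a`, `false ↦ b`. -/
def gen (x : Bool) : B3 := if x then ga else gb

/-- A letter: first component is the generator (`true` = a), second the sign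
(`true` = positive). -/
abbrev Letter := Bool × Bool

def evalLetter (l : Letter) : B3 := if l.2 then gen l.1 else (gen l.1)⁻¹

def evalWord (w : List Letter) : B3 := (w.map evalLetter).prod

/-- `w` is geodesic: no shorter word represents the same element. -/
def IsGeodesic (w : List Letter) : Prop :=
  ∀ v : List Letter, evalWord v = evalWord w → w.length ≤ v.length

/-- `w` is freely reduced. -/
def Reduced (w : List Letter) : Prop :=
  w.Chain' fun x y => ¬ (x.1 = y.1 ∧ x.2 = !y.2)

def la : Letter := (true, true)
def lA : Letter := (true, false)
def lb : Letter := (false, true)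
def lB : Letter := (false, false)
noncomputable def wordLength (g : B3) : ℕ :=
  sInf {n | ∃ w : List Letter, evalWord w = g ∧ w.length = n}


lemma evalWord_append (u v : List Letter) :
    evalWord (u ++ v) = evalWord u * evalWord v := by
  simp [evalWord]

lemma evalWord_cons (x : Letter) (t : List Letter) :
    evalWord (x :: t) = evalLetter x * evalWord t := by
  simp [evalWord]

lemma evalLetter_mul_inv (x y : Letter) (h1 : x.1 = y.1) (h2 : x.2 = !y.2) :
    evalLetter x * evalLetter y = 1 := by
  obtain ⟨a, s⟩ := x; obtain ⟨b, t⟩ := y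
  simp only at h1 h2
  subst h1; subst h2
  cases t <;> simp [evalLetter]

lemma shorten (w : List Letter) (h : ¬ Reduced w) :
    ∃ v : List Letter, evalWord v = evalWord w ∧ v.length + 2 = w.length := by
  induction w with
  | nil => exact absurd List.isChain_nil h
  | cons x t ih =>
    cases t with
    | nil => exact absurd (List.isChain_singleton x) h
    | cons y s =>
      simp only [Reduced, List.Chain', List.isChain_cons_cons] at h
      by_cases hp : x.1 = y.1 ∧ x.2 = !y.2
      · refine ⟨s, ?_, by simp⟩
        rw [evalWord_cons, evalWord_cons, ← mul_assoc,
          evalLetter_mul_inv x y hp.1 hp.2, one_mul]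
      · have h2 : ¬ Reduced (y :: s) := fun hc => h ⟨hp, hc⟩
        obtain ⟨v, hv, hl⟩ := ih h2
        refine ⟨x :: v, ?_, by simpa using hl⟩
        rw [evalWord_cons, evalWord_cons, hv]

theorem stmt13 (g : B3) (hmin : ∀ h : B3, IsConj g h → wordLength g ≤ wordLength h)
    (w : List Letter) (hw : evalWord w = g) (hgeo : IsGeodesic w) :
    Reduced w ∧
    (∀ x y : Letter, w.head? = some x → w.getLast? = some y →
      ¬ (x.1 = y.1 ∧ x.2 = !y.2)) ∧
    (∀ u v : List Letter, w = u ++ v → IsGeodesic (v ++ u)) := by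
  have hne : {n | ∃ w' : List Letter, evalWord w' = g ∧ w'.length = n}.Nonempty :=
    ⟨w.length, w, hw, rfl⟩
  have hWL : wordLength g = w.length := by
    apply le_antisymm
    · exact Nat.sInf_le ⟨w, hw, rfl⟩
    · apply le_csInf hne
      rintro n ⟨v, hv, rfl⟩
      exact hgeo v (hv.trans hw.symm)
  refine ⟨?_, ?_, ?_⟩
  · by_contra h
    obtain ⟨v, hv, hl⟩ := shorten w h
    have := hgeo v hv
    omega
  · rintro x y hx hy ⟨h1, h2⟩
    have hwne : w ≠ [] := by rintro rfl; simp at hx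
    have hy' : w.getLast hwne = y := by
      rw [List.getLast?_eq_getLast hwne] at hy
      exact Option.some.inj hy
    have hdec : w = w.dropLast ++ [y] := by
      conv_lhs => rw [← List.dropLast_append_getLast hwne]
      rw [hy']
    cases hq : w.dropLast with
    | nil =>
      rw [hq] at hdec
      rw [hdec] at hx
      simp only [List.nil_append, List.head?_cons, Option.some.injEq] at hx
      subst hx
      simp at h2
    | cons x0 m =>
      rw [hq] at hdec
      have hx0 : x0 = x := by
        rw [hdec] at hx
        simpa using hx
      subst hx0
      have hgval : g = evalLetter x0 * evalWord m * evalLetter y := by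
        rw [← hw, hdec]
        simp [evalWord, mul_assoc]
      have hmul : evalLetter x0 * evalLetter y = 1 := evalLetter_mul_inv x0 y h1 h2
      have hinv : evalLetter y = (evalLetter x0)⁻¹ :=
        eq_inv_of_mul_eq_one_right hmul
      have hconj : IsConj g (evalWord m) := by
        rw [isConj_iff]
        refine ⟨(evalLetter x0)⁻¹, ?_⟩
        rw [hgval, hinv]
        group
      have h3 := hmin _ hconj
      have h4 : wordLength (evalWord m) ≤ m.length := Nat.sInf_le ⟨m, rfl, rfl⟩
      have h5 : w.length = m.length + 2 := by rw [hdec]; simp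
      omega
  · rintro u v rfl t ht
    have hconj : IsConj g (evalWord (v ++ u)) := by
      rw [isConj_iff]
      refine ⟨(evalWord u)⁻¹, ?_⟩
      rw [← hw, evalWord_append, evalWord_append]
      group
    have h3 := hmin _ hconj
    have h4 : wordLength (evalWord (v ++ u)) ≤ t.length :=
      Nat.sInf_le ⟨t, ht, rfl⟩
    have h5 : (u ++ v).length = (v ++ u).length := by simp [Nat.add_comm]
    rw [hWL, h5] at h3
    omega
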